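/- Given the constraint i_H + i_L = I together with the relation α·arcsinh(i_H/β₁) = α·arcsinh(i_L/β₂) + γ for fixed α, β₁, β₂ > 0, γ ∈ ℝ, I ∈ ℝ, there exists a unique pair (i_H, i_L) ∈ ℝ² satisfying both equations. -/

import Mathlib

open Filter Real

private lemma arsinh_tendsto_atTop : Tendsto Real.arsinh atTop atTop :=
  Real.arsinh_strictMono.monotone.tendsto_atTop_atTop fun b =>
    ⟨Real.sinh b, (Real.arsinh_sinh b).ge⟩

private lemma arsinh_tendsto_atBot : Tendsto Real.arsinh atBot atBot :=
  Real.arsinh_strictMono.monotone.tendsto_atBot_atBot fun b =>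
    ⟨Real.sinh b, (Real.arsinh_sinh b).le⟩

/-- Unique solvability of the algebraic constraint of the zero-dimensional Li-S model:
given i_H + i_L = I and α·arcsinh(i_H/β₁) = α·arcsinh(i_L/β₂) + γ with α, β₁, β₂ > 0,
there is a unique pair (i_H, i_L). -/
theorem liS_algebraic_constraint_unique_solution
    (α β₁ β₂ γ I : ℝ) (hα : 0 < α) (hβ₁ : 0 < β₁) (hβ₂ : 0 < β₂) :
    ∃! p : ℝ × ℝ, p.1 + p.2 = I ∧
      α * Real.arsinh (p.1 / β₁) = α * Real.arsinh (p.2 / β₂) + γ := by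
  set f : ℝ → ℝ := fun x => α * Real.arsinh (x / β₁) - α * Real.arsinh ((I - x) / β₂) with hf
  have hmono : StrictMono f := by
    intro a b hab
    have h1 : Real.arsinh (a / β₁) < Real.arsinh (b / β₁) :=
      Real.arsinh_strictMono ((div_lt_div_iff_of_pos_right hβ₁).mpr hab)
    have h2 : Real.arsinh ((I - b) / β₂) < Real.arsinh ((I - a) / β₂) :=
      Real.arsinh_strictMono ((div_lt_div_iff_of_pos_right hβ₂).mpr (by linarith))
    have := mul_lt_mul_of_pos_left h1 hα
    have := mul_lt_mul_of_pos_left h2 hα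
    simp only [hf]
    linarith
  have hcont : Continuous f :=
    ((Real.continuous_arsinh.comp (continuous_id.div_const β₁)).const_smul α).sub
      ((Real.continuous_arsinh.comp ((continuous_const.sub continuous_id).div_const β₂)).const_smul α)
  have hIx : Tendsto (fun x : ℝ => (I - x)) atTop atBot := by
    have := tendsto_atBot_add_const_left atTop I tendsto_neg_atTop_atBot
    simpa [sub_eq_add_neg] using this
  have hIx' : Tendsto (fun x : ℝ => (I - x)) atBot atTop := by
    have := tendsto_atTop_add_const_left atBot I tendsto_neg_atBot_atTop
    simpa [sub_eq_add_neg] using this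
  have htop : Tendsto f atTop atTop := by
    have h1 : Tendsto (fun x : ℝ => α * Real.arsinh (x / β₁)) atTop atTop :=
      (arsinh_tendsto_atTop.comp (tendsto_id.atTop_div_const hβ₁)).const_mul_atTop hα
    have h2 : Tendsto (fun x : ℝ => -(α * Real.arsinh ((I - x) / β₂))) atTop atTop :=
      tendsto_neg_atBot_atTop.comp
        ((arsinh_tendsto_atBot.comp (hIx.atBot_div_const hβ₂)).const_mul_atBot hα)
    simp only [hf, sub_eq_add_neg]
    exact Filter.Tendsto.atTop_add_atTop h1 h2
  have hbot : Tendsto f atBot atBot := by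
    have h1 : Tendsto (fun x : ℝ => α * Real.arsinh (x / β₁)) atBot atBot :=
      (arsinh_tendsto_atBot.comp (tendsto_id.atBot_div_const hβ₁)).const_mul_atBot hα
    have h2 : Tendsto (fun x : ℝ => -(α * Real.arsinh ((I - x) / β₂))) atBot atBot :=
      tendsto_neg_atTop_atBot.comp
        ((arsinh_tendsto_atTop.comp (hIx'.atTop_div_const hβ₂)).const_mul_atTop hα)
    simp only [hf, sub_eq_add_neg]
    exact Filter.Tendsto.atBot_add_atBot h1 h2
  obtain ⟨x, hx⟩ := (hcont.surjective htop hbot) γ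
  refine ⟨(x, I - x), ⟨by ring, ?_⟩, ?_⟩
  · have : f x = γ := hx
    simp only [hf] at this
    linarith
  · rintro ⟨a, b⟩ ⟨hab, heq⟩
    have hb : b = I - a := by linarith
    have hfa : f a = γ := by
      simp only [hf]
      rw [← hb]
      linarith
    have : a = x := hmono.injective (hfa.trans hx.symm)
    simp [this, hb]
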